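/- Let v ∈ [0,1)^𝑁 and u ∈ (ρ(v), 1]. Define H(x) = B_𝑁(x,v) + B̄_𝑁(x) − b_1·x, y_0(t) = u for all t ≥ 0, and recursively y_{n+1}(t) = e^{b_1 t}·(u + ∫_0^t e^{−b_1 s} H(y_n(s)) ds). Then for every n ≥ 0 and every t ≥ 0 one has ρ(v) < y_n(t) ≤ u and y_{n+1}(t) ≤ y_n(t). -/

import Mathlib

/-- Let `v ∈ [0,1)^N` and `u ∈ (ρ(v),1]`. With
`H(x) = B_N(x,v) + B̄_N(x) − b₁x`, `y₀(t) = u` and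
`y_{n+1}(t) = e^{b₁t}(u + ∫₀ᵗ e^{−b₁s} H(y_n(s)) ds)`, one has, for all `n ≥ 0` and
`t ≥ 0`: `ρ(v) < y_n(t) ≤ u` and `y_{n+1}(t) ≤ y_n(t)`. -/
theorem stmt_8
    (b : ℕ → ℝ)
    (hb_nonneg : ∀ j : ℕ, j ≠ 1 → 0 ≤ b j)
    (hb1 : b 1 < 0)
    (hb_sum : HasSum (fun j : ℕ => if j = 1 then 0 else b j) (-(b 1)))
    (N : Finset ℕ) (hN : N.Nonempty) (h1N : (1 : ℕ) ∉ N)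
    (hbN : ∀ k ∈ N, 0 < b k)
    (v : ℕ → ℝ) (hv : ∀ j ∈ N, v j ∈ Set.Ico (0 : ℝ) 1)
    (ρv : ℝ)
    (hρv : IsLeast {w : ℝ | w ∈ Set.Icc (0 : ℝ) 1 ∧
        (∑' j : ℕ, if j ∈ N then 0 else b j * w ^ j)
          + (∑ j ∈ N, b j * v j * w ^ j) = 0} ρv)
    (u : ℝ) (hu : u ∈ Set.Ioc ρv 1)
    (H : ℝ → ℝ)
    (hH : ∀ x : ℝ, H x = (∑ j ∈ N, b j * v j * x ^ j)
        + (∑' j : ℕ, if j ∈ N then 0 else b j * x ^ j) - b 1 * x)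
    (y : ℕ → ℝ → ℝ)
    (hy0 : ∀ t : ℝ, y 0 t = u)
    (hyrec : ∀ (n : ℕ) (t : ℝ), y (n + 1) t =
      Real.exp (b 1 * t) * (u + ∫ s in (0 : ℝ)..t, Real.exp (-(b 1 * s)) * H (y n s))) :
    ∀ (n : ℕ) (t : ℝ), 0 ≤ t →
      ρv < y n t ∧ y n t ≤ u ∧ y (n + 1) t ≤ y n t := by
  obtain ⟨⟨⟨hρ0, hρ1⟩, hFρ⟩, -⟩ := hρv
  obtain ⟨huρ, hu1⟩ := hu
  have hu0 : (0:ℝ) ≤ u := le_trans hρ0 huρ.le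
  have huI : u ∈ Set.Icc (0:ℝ) 1 := ⟨hu0, hu1⟩
  have hρI : ρv ∈ Set.Icc (0:ℝ) 1 := ⟨hρ0, hρ1⟩
  -- the nonnegative coefficients of H
  set h : ℕ → ℝ := fun j => if j = 1 ∨ j ∈ N then 0 else b j with hhdef
  have hh_nonneg : ∀ j, 0 ≤ h j := by
    intro j; simp only [hhdef]; split
    · exact le_refl 0
    · exact hb_nonneg j (by tauto)
  have hh_le : ∀ j, h j ≤ (if j = 1 then 0 else b j) := by
    intro j; simp only [hhdef]
    by_cases h1 : j = 1
    · simp [h1]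
    · by_cases h2 : j ∈ N
      · simp [h1, h2]; exact hb_nonneg j h1
      · simp [h1, h2]
  have hhsum : Summable h := Summable.of_nonneg_of_le hh_nonneg hh_le hb_sum.summable
  have hsumx : ∀ x : ℝ, x ∈ Set.Icc (0:ℝ) 1 → Summable (fun j => h j * x ^ j) := by
    intro x hx
    refine Summable.of_nonneg_of_le
      (fun j => mul_nonneg (hh_nonneg j) (pow_nonneg hx.1 j))
      (fun j => ?_) hhsum
    exact mul_le_of_le_one_right (hh_nonneg j) (pow_le_one₀ hx.1 hx.2)
  -- splitting the tsum
  have hsplit : ∀ x ∈ Set.Icc (0:ℝ) 1,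
      (∑' j : ℕ, if j ∈ N then 0 else b j * x ^ j)
        = b 1 * x + ∑' j, h j * x ^ j := by
    intro x hx
    have e1 : ∀ j : ℕ, (if j ∈ N then 0 else b j * x ^ j)
        = (if j = 1 then b 1 * x else 0) + h j * x ^ j := by
      intro j
      by_cases h1 : j = 1
      · subst h1; simp [hhdef, h1N, pow_one]
      · by_cases h2 : j ∈ N <;> simp [hhdef, h1, h2]
    rw [tsum_congr e1,
      Summable.tsum_add ((hasSum_ite_eq 1 (b 1 * x)).summable) (hsumx x hx), tsum_ite_eq]
  have hHQ : ∀ x ∈ Set.Icc (0:ℝ) 1,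
      H x = (∑ j ∈ N, b j * v j * x ^ j) + ∑' j, h j * x ^ j := by
    intro x hx; rw [hH, hsplit x hx]; ring
  -- relation with F
  have hFH : ∀ x ∈ Set.Icc (0:ℝ) 1,
      (∑' j : ℕ, if j ∈ N then 0 else b j * x ^ j) + (∑ j ∈ N, b j * v j * x ^ j)
        = H x + b 1 * x := by
    intro x hx; rw [hH, hsplit x hx]; ring
  have hcoeff : ∀ j ∈ N, 0 ≤ b j * v j :=
    fun j hj => mul_nonneg (hbN j hj).le (hv j hj).1
  -- monotonicity of H on [0,1]
  have hHmono : ∀ x x', x ∈ Set.Icc (0:ℝ) 1 → x' ∈ Set.Icc (0:ℝ) 1 → x ≤ x' →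
      H x ≤ H x' := by
    intro x x' hx hx' hle
    rw [hHQ x hx, hHQ x' hx']
    refine add_le_add (Finset.sum_le_sum fun j hj => ?_)
      (Summable.tsum_le_tsum (fun j => ?_) (hsumx x hx) (hsumx x' hx'))
    · exact mul_le_mul_of_nonneg_left (pow_le_pow_left₀ hx.1 hle j) (hcoeff j hj)
    · exact mul_le_mul_of_nonneg_left (pow_le_pow_left₀ hx.1 hle j) (hh_nonneg j)
  -- value at ρv
  have hHρ : H ρv = -(b 1) * ρv := by
    have := hFH ρv hρI
    rw [hFρ] at this
    linarith [this]
  -- value at 1 : F 1 ≤ 0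
  have hF1 : (∑' j : ℕ, if j ∈ N then 0 else b j * (1:ℝ) ^ j)
      + (∑ j ∈ N, b j * v j * (1:ℝ) ^ j) ≤ 0 := by
    have h1 : HasSum (fun j : ℕ => if j ∈ N then b j else 0) (∑ j ∈ N, b j) := by
      have h0 := hasSum_sum_of_ne_finset_zero (L := SummationFilter.unconditional ℕ) (s := N)
        (f := fun j : ℕ => if j ∈ N then b j else 0) (by intro j hj; simp [hj])
      rwa [Finset.sum_congr rfl (fun j hj => if_pos hj)] at h0
    have h2 : HasSum (fun j : ℕ => if j = 1 then b 1 else 0) (b 1) :=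
      hasSum_ite_eq 1 (b 1)
    have h3 : HasSum (fun j : ℕ => if j ∈ N then 0 else b j)
        (-(b 1) + b 1 - ∑ j ∈ N, b j) := by
      have h4 := (hb_sum.add h2).sub h1
      have h5 : (fun j : ℕ => ((if j = 1 then 0 else b j) + (if j = 1 then b 1 else 0))
          - (if j ∈ N then b j else 0)) = fun j : ℕ => if j ∈ N then 0 else b j := by
        funext j
        by_cases ha : j = 1
        · subst ha; simp [h1N]
        · by_cases hb : j ∈ N <;> simp [ha, hb]
      rwa [h5] at h4
    have h6 : (∑' j : ℕ, if j ∈ N then 0 else b j * (1:ℝ) ^ j) = - ∑ j ∈ N, b j := by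
      have : (fun j : ℕ => if j ∈ N then 0 else b j * (1:ℝ) ^ j)
          = fun j : ℕ => if j ∈ N then 0 else b j := by
        funext j; by_cases hb : j ∈ N <;> simp [hb]
      rw [this, h3.tsum_eq]; ring
    rw [h6]
    have h7 : ∑ j ∈ N, b j * v j * (1:ℝ) ^ j ≤ ∑ j ∈ N, b j := by
      refine Finset.sum_le_sum fun j hj => ?_
      rw [one_pow, mul_one]
      exact mul_le_of_le_one_right (hbN j hj).le (hv j hj).2.le
    linarith
  -- convexity: H u + b 1 * u ≤ 0
  have hρlt1 : ρv < 1 := lt_of_lt_of_le huρ hu1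
  have hkey : H u + b 1 * u ≤ 0 := by
    set lam : ℝ := (u - ρv) / (1 - ρv) with hlam
    have hlam0 : 0 ≤ lam := div_nonneg (by linarith) (by linarith)
    have hlam1 : lam ≤ 1 := by
      rw [hlam, div_le_one (by linarith)]; linarith
    have hrep : u = (1 - lam) * ρv + lam * 1 := by
      have hne : (1:ℝ) - ρv ≠ 0 := ne_of_gt (by linarith)
      rw [hlam]; field_simp; ring
    -- convex combination inequality for H + b1 * x
    have hcomb : ∀ x : ℝ, x ∈ Set.Icc (0:ℝ) 1 → ∀ x' : ℝ, x' ∈ Set.Icc (0:ℝ) 1 →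
        ∀ s t : ℝ, 0 ≤ s → 0 ≤ t → s + t = 1 →
        H (s * x + t * x') + b 1 * (s * x + t * x')
          ≤ s * (H x + b 1 * x) + t * (H x' + b 1 * x') := by
      intro x hx x' hx' s t hs ht hst
      have hmemc : s * x + t * x' ∈ Set.Icc (0:ℝ) 1 := by
        constructor
        · exact add_nonneg (mul_nonneg hs hx.1) (mul_nonneg ht hx'.1)
        · calc s * x + t * x' ≤ s * 1 + t * 1 := by
                exact add_le_add (mul_le_mul_of_nonneg_left hx.2 hs)
                  (mul_le_mul_of_nonneg_left hx'.2 ht)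
            _ = 1 := by linarith
      have hpow : ∀ j : ℕ, (s * x + t * x') ^ j ≤ s * x ^ j + t * x' ^ j := by
        intro j
        have := (convexOn_pow (𝕜 := ℝ) j).2 (Set.mem_Ici.2 hx.1) (Set.mem_Ici.2 hx'.1)
          hs ht hst
        simpa [smul_eq_mul] using this
      rw [hHQ _ hmemc, hHQ x hx, hHQ x' hx']
      have hsum1 : ∑ j ∈ N, b j * v j * (s * x + t * x') ^ j
          ≤ s * ∑ j ∈ N, b j * v j * x ^ j + t * ∑ j ∈ N, b j * v j * x' ^ j := by
        rw [Finset.mul_sum, Finset.mul_sum, ← Finset.sum_add_distrib]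
        refine Finset.sum_le_sum fun j hj => ?_
        have := mul_le_mul_of_nonneg_left (hpow j) (hcoeff j hj)
        nlinarith [hcoeff j hj]
      have hsum2 : (∑' j, h j * (s * x + t * x') ^ j)
          ≤ s * (∑' j, h j * x ^ j) + t * (∑' j, h j * x' ^ j) := by
        have hS1 := (hsumx x hx).mul_left s
        have hS2 := (hsumx x' hx').mul_left t
        calc (∑' j, h j * (s * x + t * x') ^ j)
            ≤ ∑' j, (s * (h j * x ^ j) + t * (h j * x' ^ j)) := by
              refine Summable.tsum_le_tsum (fun j => ?_) (hsumx _ hmemc) (hS1.add hS2)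
              have := mul_le_mul_of_nonneg_left (hpow j) (hh_nonneg j)
              nlinarith [hh_nonneg j]
          _ = s * (∑' j, h j * x ^ j) + t * (∑' j, h j * x' ^ j) := by
              rw [Summable.tsum_add hS1 hS2, tsum_mul_left, tsum_mul_left]
      nlinarith [hsum1, hsum2]
    have hc := hcomb ρv hρI 1 (by norm_num) (1 - lam) lam (by linarith) hlam0 (by ring)
    rw [← hrep] at hc
    have hFρ' : H ρv + b 1 * ρv = 0 := by rw [hHρ]; ring
    have hF1' : H 1 + b 1 * 1 ≤ 0 := by
      have := hFH 1 (by norm_num)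
      linarith [hF1]
    nlinarith [hc, hlam0]
  -- continuity of H on [0,1]
  have hHcont : ContinuousOn H (Set.Icc (0:ℝ) 1) := by
    set q : ℝ → ℝ := fun x => max 0 (min x 1) with hq
    have hqc : Continuous q := continuous_const.max (continuous_id.min continuous_const)
    have hqm : ∀ x, q x ∈ Set.Icc (0:ℝ) 1 := fun x =>
      ⟨le_max_left _ _, max_le (by norm_num) (min_le_right _ _)⟩
    have hqid : ∀ x ∈ Set.Icc (0:ℝ) 1, q x = x := fun x hx => by
      simp only [hq]; rw [min_eq_left hx.2, max_eq_right hx.1]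
    have hT : Continuous (fun x : ℝ => ∑' j, h j * (q x) ^ j) := by
      refine continuous_tsum (fun j => (continuous_const.mul (hqc.pow j))) hhsum
        (fun j x => ?_)
      rw [Real.norm_eq_abs,
        abs_of_nonneg (mul_nonneg (hh_nonneg j) (pow_nonneg (hqm x).1 j))]
      exact mul_le_of_le_one_right (hh_nonneg j) (pow_le_one₀ (hqm x).1 (hqm x).2)
    have hC : Continuous
        (fun x : ℝ => (∑ j ∈ N, b j * v j * x ^ j) + ∑' j, h j * (q x) ^ j) := by
      exact (continuous_finset_sum N
        (fun j _ => continuous_const.mul (continuous_pow j))).add hT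
    refine ContinuousOn.congr hC.continuousOn (fun x hx => ?_)
    rw [hHQ x hx, hqid x hx]
  -- explicit exponential integral
  have hInt : ∀ (C t : ℝ), (∫ s in (0:ℝ)..t, Real.exp (-(b 1 * s)) * (-(b 1) * C))
      = C * Real.exp (-(b 1 * t)) - C := by
    intro C t
    have hd : ∀ x ∈ Set.uIcc (0:ℝ) t,
        HasDerivAt (fun s => C * Real.exp (-(b 1 * s)))
          (Real.exp (-(b 1 * x)) * (-(b 1) * C)) x := by
      intro x _
      have h1 : HasDerivAt (fun s : ℝ => -(b 1 * s)) (-(b 1)) x := by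
        exact (((hasDerivAt_id x).const_mul (b 1)).neg).congr_deriv (by simp)
      have h2 := (h1.exp).const_mul C
      exact h2.congr_deriv (by ring)
    have hi : IntervalIntegrable (fun s => Real.exp (-(b 1 * s)) * (-(b 1) * C))
        MeasureTheory.volume 0 t :=
      ((Real.continuous_exp.comp ((continuous_const.mul continuous_id).neg)).mul
        continuous_const).intervalIntegrable _ _
    rw [intervalIntegral.integral_eq_sub_of_hasDerivAt hd hi]
    simp
  have hmem : ∀ x : ℝ, ρv < x → x ≤ u → x ∈ Set.Icc (0:ℝ) 1 := fun x h1 h2 =>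
    ⟨le_trans hρ0 h1.le, le_trans h2 hu1⟩
  -- one Picard step
  have hstep : ∀ n : ℕ,
      (∀ s, 0 ≤ s → ρv < y n s ∧ y n s ≤ u) →
      (∀ T, 0 ≤ T → ContinuousOn (y n) (Set.Icc 0 T)) →
      (∀ t, 0 ≤ t → ρv + Real.exp (b 1 * t) * (u - ρv) ≤ y (n+1) t ∧ y (n+1) t ≤ u)
        ∧ (∀ T, 0 ≤ T → ContinuousOn (y (n+1)) (Set.Icc 0 T)) := by
    intro n hbd hcn
    have hynmem : ∀ s, 0 ≤ s → y n s ∈ Set.Icc (0:ℝ) 1 := fun s hs =>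
      hmem _ (hbd s hs).1 (hbd s hs).2
    have hgcont : ∀ T, 0 ≤ T →
        ContinuousOn (fun s => Real.exp (-(b 1 * s)) * H (y n s)) (Set.Icc 0 T) := by
      intro T hT
      exact ((Real.continuous_exp.comp
        ((continuous_const.mul continuous_id).neg)).continuousOn).mul
        (hHcont.comp (hcn T hT) (fun s hs => hynmem s hs.1))
    have hgint : ∀ t, 0 ≤ t →
        IntervalIntegrable (fun s => Real.exp (-(b 1 * s)) * H (y n s))
          MeasureTheory.volume 0 t := by
      intro t ht
      apply ContinuousOn.intervalIntegrable
      rw [Set.uIcc_of_le ht]; exact hgcont t ht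
    constructor
    · intro t ht
      have hexp0 : (0:ℝ) < Real.exp (b 1 * t) := Real.exp_pos _
      have hup : (∫ s in (0:ℝ)..t, Real.exp (-(b 1 * s)) * H (y n s))
          ≤ u * Real.exp (-(b 1 * t)) - u := by
        rw [← hInt u t]
        refine intervalIntegral.integral_mono_on ht (hgint t ht)
          (((Real.continuous_exp.comp ((continuous_const.mul continuous_id).neg)).mul
            continuous_const).intervalIntegrable _ _) (fun s hs => ?_)
        have h1 : H (y n s) ≤ H u := hHmono _ _ (hynmem s hs.1) huI (hbd s hs.1).2
        have h2 : H u ≤ -(b 1) * u := by linarith [hkey]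
        have h3 := Real.exp_pos (-(b 1 * s))
        nlinarith
      have hlow : ρv * Real.exp (-(b 1 * t)) - ρv
          ≤ (∫ s in (0:ℝ)..t, Real.exp (-(b 1 * s)) * H (y n s)) := by
        rw [← hInt ρv t]
        refine intervalIntegral.integral_mono_on ht
          (((Real.continuous_exp.comp ((continuous_const.mul continuous_id).neg)).mul
            continuous_const).intervalIntegrable _ _) (hgint t ht) (fun s hs => ?_)
        have h1 : H ρv ≤ H (y n s) := hHmono _ _ hρI (hynmem s hs.1) (hbd s hs.1).1.le
        rw [hHρ] at h1
        have h3 := Real.exp_pos (-(b 1 * s))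
        nlinarith
      have hee : Real.exp (b 1 * t) * Real.exp (-(b 1 * t)) = 1 := by
        rw [← Real.exp_add]; simp
      constructor
      · rw [hyrec n t]
        nlinarith [mul_le_mul_of_nonneg_left hlow hexp0.le, hee]
      · rw [hyrec n t]
        nlinarith [mul_le_mul_of_nonneg_left hup hexp0.le, hee]
    · intro T hT
      have hint : MeasureTheory.IntegrableOn
          (fun s => Real.exp (-(b 1 * s)) * H (y n s)) (Set.uIcc (0:ℝ) T) := by
        rw [Set.uIcc_of_le hT]; exact (hgcont T hT).integrableOn_Icc
      have hprim := intervalIntegral.continuousOn_primitive_interval hint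
      rw [Set.uIcc_of_le hT] at hprim
      have hC : ContinuousOn (fun t => Real.exp (b 1 * t) *
          (u + ∫ s in (0:ℝ)..t, Real.exp (-(b 1 * s)) * H (y n s))) (Set.Icc 0 T) :=
        ((Real.continuous_exp.comp (continuous_const.mul continuous_id)).continuousOn).mul
          (continuousOn_const.add hprim)
      exact hC.congr (fun t _ => hyrec n t)
  -- bounds and continuity for all n
  have hmain : ∀ n : ℕ, (∀ s, 0 ≤ s → ρv < y n s ∧ y n s ≤ u)
      ∧ (∀ T, 0 ≤ T → ContinuousOn (y n) (Set.Icc 0 T)) := by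
    intro n
    induction n with
    | zero =>
      constructor
      · intro s _; rw [hy0 s]; exact ⟨huρ, le_refl u⟩
      · intro T _; exact continuousOn_const.congr (fun t _ => hy0 t)
    | succ n ih =>
      obtain ⟨ih1, ih2⟩ := ih
      obtain ⟨hb', hc'⟩ := hstep n ih1 ih2
      refine ⟨fun s hs => ⟨?_, (hb' s hs).2⟩, hc'⟩
      have h1 := (hb' s hs).1
      nlinarith [Real.exp_pos (b 1 * s)]
  have hgcont2 : ∀ (m : ℕ) (t : ℝ), 0 ≤ t →
      IntervalIntegrable (fun s => Real.exp (-(b 1 * s)) * H (y m s))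
        MeasureTheory.volume 0 t := by
    intro m t ht
    apply ContinuousOn.intervalIntegrable
    rw [Set.uIcc_of_le ht]
    exact ((Real.continuous_exp.comp
      ((continuous_const.mul continuous_id).neg)).continuousOn).mul
      (hHcont.comp ((hmain m).2 t ht)
        (fun s hs => hmem _ (((hmain m).1 s hs.1).1) (((hmain m).1 s hs.1).2)))
  have hmono : ∀ (n : ℕ) (t : ℝ), 0 ≤ t → y (n+1) t ≤ y n t := by
    intro n
    induction n with
    | zero =>
      intro t ht
      rw [hy0 t]
      exact ((hstep 0 (hmain 0).1 (hmain 0).2).1 t ht).2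
    | succ n ih =>
      intro t ht
      rw [hyrec n t, hyrec (n+1) t]
      have hI : (∫ s in (0:ℝ)..t, Real.exp (-(b 1 * s)) * H (y (n+1) s))
          ≤ ∫ s in (0:ℝ)..t, Real.exp (-(b 1 * s)) * H (y n s) := by
        refine intervalIntegral.integral_mono_on ht (hgcont2 (n+1) t ht)
          (hgcont2 n t ht) (fun s hs => ?_)
        refine mul_le_mul_of_nonneg_left
          (hHmono _ _ (hmem _ (((hmain (n+1)).1 s hs.1).1) (((hmain (n+1)).1 s hs.1).2))
            (hmem _ (((hmain n).1 s hs.1).1) (((hmain n).1 s hs.1).2)) (ih s hs.1))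
          (Real.exp_pos _).le
      exact mul_le_mul_of_nonneg_left (add_le_add_right hI u) (Real.exp_pos (b 1 * t)).le
  intro n t ht
  exact ⟨((hmain n).1 t ht).1, ((hmain n).1 t ht).2, hmono n t ht⟩
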